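/- Let M = (M_p) and N = (N_p) be normalized positive log-convex sequences with finite associated functions ω_M, ω_N. If there exist A ≥ 1 and B > 0 such that ω_N(t) + log t ≤ ω_M(At) + B for all t > 0, then there exists A' ≥ 1 such that M_{p+1} ≤ (A')^{p+1} N_p for all p ∈ ℕ₀. -/

import Mathlib

/-- The (real-valued) associated function `ω_M(t) = sup_p log (t^p / M_p)`. -/
noncomputable def assocFnR (M : ℕ → ℝ) (t : ℝ) : ℝ :=
  ⨆ p : ℕ, Real.log (t ^ p / M p)

lemma ratio_mono (M : ℕ → ℝ) (hMpos : ∀ p, 0 < M p)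
    (hlc : ∀ q : ℕ, (M (q+1))^2 ≤ M q * M (q+2)) :
    ∀ j k, j ≤ k → M (j+1) * M k ≤ M j * M (k+1) := by
  intro j k hjk
  induction k with
  | zero =>
    interval_cases j
    nlinarith [hlc 0, hMpos 0, hMpos 1]
  | succ k ih =>
    rcases Nat.lt_or_ge j (k+1) with hj | hj
    · have h1 := ih (Nat.lt_succ_iff.mp hj)
      have h2 := hlc k
      have hk1 := hMpos (k+1)
      have hk := hMpos k
      have hj1 := hMpos (j+1)
      have hj0 := hMpos j
      -- M(j+1) M(k+1) ≤ M j M(k+2)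
      have hk2 := hMpos (k+2)
      have : M (j+1) * M (k+1) * M (k+1) ≤ M j * M (k+2) * M (k+1) := by
        nlinarith [mul_le_mul_of_nonneg_left h2 hj1.le,
          mul_le_mul_of_nonneg_right h1 hk2.le]
      exact le_of_mul_le_mul_right this hk1
    · have : j = k + 1 := le_antisymm hjk hj
      subst this
      ring_nf
      nlinarith [hMpos (k+1), hMpos (k+2)]

lemma key_chain (M : ℕ → ℝ) (hMpos : ∀ p, 0 < M p)
    (hlc : ∀ q : ℕ, (M (q+1))^2 ≤ M q * M (q+2)) (p q : ℕ) :
    (M (p+1) / M p) ^ q / M q ≤ (M (p+1) / M p) ^ (p+1) / M (p+1) := by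
  set t := M (p+1) / M p with ht
  have htpos : 0 < t := div_pos (hMpos _) (hMpos _)
  have hrm := ratio_mono M hMpos hlc
  rcases Nat.lt_or_ge q (p+1) with hq | hq
  · -- q ≤ p : show t^q / M q ≤ t^(p+1)/M(p+1), induct downward
    -- prove: ∀ d ≤ p+1, t^(p+1-d) / M (p+1-d) ≤ t^(p+1) / M (p+1)
    have main : ∀ d, d ≤ p + 1 → t ^ (p+1-d) / M (p+1-d) ≤ t ^ (p+1) / M (p+1) := by
      intro d hd
      induction d with
      | zero => simp
      | succ d ihd =>
        have hd' : d ≤ p + 1 := Nat.le_of_succ_le hd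
        have ih := ihd hd'
        have hstep : t ^ (p+1-(d+1)) / M (p+1-(d+1)) ≤ t ^ (p+1-d) / M (p+1-d) := by
          have h1 : p + 1 - (d+1) + 1 = p + 1 - d := by omega
          set e := p + 1 - (d+1) with he
          have he1 : p + 1 - d = e + 1 := by omega
          rw [he1]
          -- t^e / M e ≤ t^(e+1) / M(e+1)  ⟺  M(e+1) ≤ t * M e ⟺ M(e+1)/M e ≤ t
          have hep : e ≤ p := by omega
          have hr := hrm e p hep
          have hMe := hMpos e
          have hMe1 := hMpos (e+1)
          have hMp := hMpos p
          have hMp1 := hMpos (p+1)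
          rw [div_le_div_iff₀ hMe hMe1, pow_succ]
          have htt : M (e+1) ≤ t * M e := by
            rw [ht, div_mul_eq_mul_div, le_div_iff₀ hMp]
            nlinarith
          nlinarith [pow_pos htpos e]
        exact hstep.trans ih
      --
    have hdq : q = p + 1 - (p + 1 - q) := by omega
    have := main (p + 1 - q) (by omega)
    rw [← hdq] at this
    exact this
  · -- q ≥ p+1
    obtain ⟨d, rfl⟩ := Nat.exists_eq_add_of_le hq
    induction d with
    | zero => simp
    | succ d ihd =>
      have ih := ihd (by omega)
      have hstep : t ^ (p+1+(d+1)) / M (p+1+(d+1)) ≤ t ^ (p+1+d) / M (p+1+d) := by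
        have hMe := hMpos (p+1+d)
        have hMe1 := hMpos (p+1+d+1)
        have h1 : p+1+(d+1) = (p+1+d)+1 := by omega
        rw [h1, div_le_div_iff₀ hMe1 hMe, pow_succ]
        have hr := hrm p (p+1+d) (by omega)
        have hMp := hMpos p
        have hMp1 := hMpos (p+1)
        -- t * M (p+1+d) ≤ M (p+1+d+1) since t = M(p+1)/M p ≤ M(p+1+d+1)/M(p+1+d)
        have htt : t * M (p+1+d) ≤ M (p+1+d+1) := by
          rw [ht, div_mul_eq_mul_div, div_le_iff₀ hMp]
          nlinarith
        nlinarith [pow_pos htpos (p+1+d)]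
      exact hstep.trans ih

/-- If the associated functions are finite and
`ω_N(t) + log t ≤ ω_M(A t) + B` for all `t > 0`, then `M_{p+1} ≤ (A')^{p+1} N_p` for some
`A' ≥ 1` and all `p`. -/
theorem stmt4 (M N : ℕ → ℝ) (hMpos : ∀ p, 0 < M p) (hNpos : ∀ p, 0 < N p)
    (hMnorm : M 0 = 1) (hNnorm : N 0 = 1)
    (hMlc : ∀ p : ℕ, 1 ≤ p → (M p) ^ 2 ≤ M (p - 1) * M (p + 1))
    (hNlc : ∀ p : ℕ, 1 ≤ p → (N p) ^ 2 ≤ N (p - 1) * N (p + 1))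
    (hMfin : ∀ t : ℝ, 0 < t → BddAbove (Set.range fun p : ℕ => Real.log (t ^ p / M p)))
    (hNfin : ∀ t : ℝ, 0 < t → BddAbove (Set.range fun p : ℕ => Real.log (t ^ p / N p)))
    (h : ∃ A B : ℝ, 1 ≤ A ∧ 0 < B ∧ ∀ t : ℝ, 0 < t →
      assocFnR N t + Real.log t ≤ assocFnR M (A * t) + B) :
    ∃ A' : ℝ, 1 ≤ A' ∧ ∀ p : ℕ, M (p + 1) ≤ A' ^ (p + 1) * N p := by
  obtain ⟨A, B, hA, hB, hAB⟩ := h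
  have hApos : 0 < A := lt_of_lt_of_le one_pos hA
  have hexp1 : 1 ≤ Real.exp B := Real.one_le_exp hB.le
  refine ⟨A * Real.exp B, by nlinarith [Real.exp_pos B], ?_⟩
  intro p
  have hlcM : ∀ q : ℕ, (M (q+1))^2 ≤ M q * M (q+2) := by
    intro q
    have := hMlc (q+1) (by omega)
    simpa using this
  set t := M (p+1) / M p with ht
  have htpos : 0 < t := div_pos (hMpos _) (hMpos _)
  set t' := t / A with ht'
  have ht'pos : 0 < t' := div_pos htpos hApos
  have hAt' : A * t' = t := by rw [ht']; field_simp
  -- upper bound on ω_M(t)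
  have hωM : assocFnR M t ≤ Real.log (t ^ (p+1) / M (p+1)) := by
    apply ciSup_le
    intro q
    have := key_chain M hMpos hlcM p q
    exact Real.log_le_log (div_pos (pow_pos htpos q) (hMpos q)) this
  -- lower bound on ω_N(t')
  have hωN : Real.log (t' ^ p / N p) ≤ assocFnR N t' :=
    le_ciSup (hNfin t' ht'pos) p
  have hmain := hAB t' ht'pos
  rw [hAt'] at hmain
  have chain : Real.log (t' ^ p / N p) + Real.log t' ≤ Real.log (t ^ (p+1) / M (p+1)) + B :=
    le_trans (add_le_add_left hωN _) (hmain.trans (add_le_add_left hωM B))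
  have hlog1 : Real.log (t' ^ p / N p) + Real.log t' = Real.log (t' ^ (p+1) / N p) := by
    rw [← Real.log_mul (ne_of_gt (div_pos (pow_pos ht'pos p) (hNpos p))) (ne_of_gt ht'pos)]
    congr 1
    field_simp
    ring
  have hlog2 : Real.log (t ^ (p+1) / M (p+1)) + B
      = Real.log (t ^ (p+1) / M (p+1) * Real.exp B) := by
    rw [Real.log_mul (ne_of_gt (div_pos (pow_pos htpos (p+1)) (hMpos (p+1)))) (Real.exp_pos B).ne', Real.log_exp]
  rw [hlog1, hlog2] at chain
  have hineq : t' ^ (p+1) / N p ≤ t ^ (p+1) / M (p+1) * Real.exp B := by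
    have := Real.exp_le_exp.mpr chain
    rwa [Real.exp_log (div_pos (pow_pos ht'pos (p+1)) (hNpos p)),
      Real.exp_log (mul_pos (div_pos (pow_pos htpos (p+1)) (hMpos (p+1))) (Real.exp_pos B))] at this
  -- t = A * t'
  have hteq : t ^ (p+1) = A ^ (p+1) * t' ^ (p+1) := by
    rw [← hAt', mul_pow]
  rw [hteq] at hineq
  have hNp := hNpos p
  have hMp1 := hMpos (p+1)
  have ht'p : 0 < t' ^ (p+1) := pow_pos ht'pos _
  -- from hineq: M(p+1) ≤ A^(p+1) * exp B * N p
  have hstep : M (p+1) ≤ A ^ (p+1) * Real.exp B * N p := by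
    have h2 : t' ^ (p+1) * M (p+1) ≤ t' ^ (p+1) * (A ^ (p+1) * Real.exp B * N p) := by
      have h3 := mul_le_mul_of_nonneg_right hineq (mul_pos hNp hMp1).le
      have h4 : t' ^ (p+1) / N p * (N p * M (p+1)) = t' ^ (p+1) * M (p+1) := by
        field_simp
      have h5 : A ^ (p+1) * t' ^ (p+1) / M (p+1) * Real.exp B * (N p * M (p+1))
          = t' ^ (p+1) * (A ^ (p+1) * Real.exp B * N p) := by
        field_simp
      rw [h4, h5] at h3
      exact h3
    exact le_of_mul_le_mul_left h2 ht'p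
  calc M (p+1) ≤ A ^ (p+1) * Real.exp B * N p := hstep
    _ ≤ (A * Real.exp B) ^ (p+1) * N p := by
        rw [mul_pow]
        have : Real.exp B ≤ Real.exp B ^ (p+1) :=
          le_self_pow₀ hexp1 (by omega)
        nlinarith [pow_pos hApos (p+1), Real.exp_pos B, hNpos p]
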